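/- Let J ⊆ ℝ be an interval and f : J → (0,∞) be a convex function. Then for all a, b ∈ J and all t ∈ [0,1], with R = max{t, 1−t}, one has (1−t)f(a) + t·f(b) ≤ f((1−t)a + tb) + 2R·((f(a)+f(b))/2 − f((a+b)/2)). -/

import Mathlib

/-- If `f : J → (0, ∞)` is convex on an interval `J ⊆ ℝ`, then for
`a, b ∈ J`, `t ∈ [0,1]` and `R = max {t, 1 - t}`,
`(1-t)f(a) + t f(b) ≤ f((1-t)a + tb) + 2R((f(a)+f(b))/2 - f((a+b)/2))`. -/
theorem stmt1 (J : Set ℝ) (hJ : Convex ℝ J) (f : ℝ → ℝ)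
    (hf : ConvexOn ℝ J f) (hfpos : ∀ x ∈ J, 0 < f x)
    (a b : ℝ) (ha : a ∈ J) (hb : b ∈ J)
    (t : ℝ) (ht : t ∈ Set.Icc (0 : ℝ) 1) (R : ℝ) (hR : R = max t (1 - t)) :
    (1 - t) * f a + t * f b ≤
      f ((1 - t) * a + t * b) + 2 * R * ((f a + f b) / 2 - f ((a + b) / 2)) := by
  obtain ⟨ht0, ht1⟩ := ht
  have hcJ : (1 - t) * a + t * b ∈ J := hJ ha hb (by linarith) ht0 (by ring)
  rcases le_or_gt t (1/2) with h | h
  · have hpos : (0:ℝ) < 2 * (1 - t) := by linarith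
    have hne : (2 * (1 - t)) ≠ 0 := ne_of_gt hpos
    have hRval : R = 1 - t := by rw [hR, max_eq_right]; linarith
    have key := hf.2 hcJ hb (le_of_lt (by positivity : (0:ℝ) < 1 / (2 * (1 - t))))
      (by apply div_nonneg <;> linarith : (0:ℝ) ≤ (1 - 2 * t) / (2 * (1 - t)))
      (by field_simp [show (1 - t) ≠ 0 by linarith]; ring)
    have hmid : (1 / (2 * (1 - t))) • ((1 - t) * a + t * b) +
        ((1 - 2 * t) / (2 * (1 - t))) • b = (a + b) / 2 := by
      simp only [smul_eq_mul]; field_simp [show (1 - t) ≠ 0 by linarith]; ring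
    rw [hmid, smul_eq_mul, smul_eq_mul] at key
    have key2 : 2 * (1 - t) * f ((a + b) / 2) ≤
        f ((1 - t) * a + t * b) + (1 - 2 * t) * f b := by
      have h2 := mul_le_mul_of_nonneg_left key (le_of_lt hpos)
      calc 2 * (1 - t) * f ((a + b) / 2) ≤ 2 * (1 - t) *
            (1 / (2 * (1 - t)) * f ((1 - t) * a + t * b) +
              (1 - 2 * t) / (2 * (1 - t)) * f b) := h2
        _ = f ((1 - t) * a + t * b) + (1 - 2 * t) * f b := by field_simp [show (1 - t) ≠ 0 by linarith]
    rw [hRval]; linarith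
  · have hpos : (0:ℝ) < 2 * t := by linarith
    have hRval : R = t := by rw [hR, max_eq_left]; linarith
    have key := hf.2 hcJ ha (le_of_lt (by positivity : (0:ℝ) < 1 / (2 * t)))
      (by apply div_nonneg <;> linarith : (0:ℝ) ≤ (2 * t - 1) / (2 * t))
      (by field_simp; ring)
    have hmid : (1 / (2 * t)) • ((1 - t) * a + t * b) +
        ((2 * t - 1) / (2 * t)) • a = (a + b) / 2 := by
      simp only [smul_eq_mul]; field_simp; ring
    rw [hmid, smul_eq_mul, smul_eq_mul] at key
    have key2 : 2 * t * f ((a + b) / 2) ≤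
        f ((1 - t) * a + t * b) + (2 * t - 1) * f a := by
      have h2 := mul_le_mul_of_nonneg_left key (le_of_lt hpos)
      calc 2 * t * f ((a + b) / 2) ≤ 2 * t *
            (1 / (2 * t) * f ((1 - t) * a + t * b) +
              (2 * t - 1) / (2 * t) * f a) := h2
        _ = f ((1 - t) * a + t * b) + (2 * t - 1) * f a := by field_simp
    rw [hRval]; linarith
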